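/- For every n ≥ 0 and every lattice path P = p_1…p_{2n+2} ∈ P_n, the filling φ(P) of θ^(n) defined as follows is a standard Young tableau of shape θ^(n): place 1 in the cell (0,0); for each i with p_i = E, place i+2 in the arm; for each i with p_i = N, place i+2 in the leg; for the unique index j whose step p_j is backwards (S or W), place j+2 in the heart; and place 2 in the arm if p_j = S and in the leg if p_j = W (in each of the arm and the leg, the assigned values are arranged in increasing order along the row, respectively down the column). Moreover φ is a two-sided inverse of the map ψ, where ψ(T) = p_1…p_{2n+2} is given by p_i = E if the entry i+2 of T lies in the arm, p_i = N if i+2 lies in the leg, p_i = S if i+2 lies in the heart and 2 lies in the arm, and p_i = W if i+2 lies in the heart and 2 lies in the leg. -/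

import Mathlib

/-- The four unit steps of a lattice path. -/
inductive Step : Type
  | N | S | E | W
  deriving DecidableEq

/-- The vector in `ℤ × ℤ` corresponding to a step. -/
def stepVec : Step → ℤ × ℤ
  | Step.N => (0, 1)
  | Step.S => (0, -1)
  | Step.E => (1, 0)
  | Step.W => (-1, 0)

/-- The endpoint of the lattice path described by the word `w`, starting at the origin. -/
def endpt (w : List Step) : ℤ × ℤ := (w.map stepVec).sum

/-- `w` is a lattice path in `𝒫ₙ`: it has length `2n+2`, stays weakly in the first
quadrant, and ends at `(n, n)`. -/
def IsPath (n : ℕ) (w : List Step) : Prop :=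
  w.length = 2 * n + 2 ∧
  (∀ k : ℕ, 0 ≤ (endpt (w.take k)).1 ∧ 0 ≤ (endpt (w.take k)).2) ∧
  endpt w = ((n : ℤ), (n : ℤ))

/-- The cells of the Young diagram of `θ⁽ⁿ⁾ = (n+2, 2, 1ⁿ)`, in (row, column) matrix
coordinates, 0-indexed, English orientation. -/
def cells (n : ℕ) : Set (ℕ × ℕ) :=
  {c | (c.1 = 0 ∧ c.2 ≤ n + 1) ∨ c = (1, 1) ∨ (c.2 = 0 ∧ 1 ≤ c.1 ∧ c.1 ≤ n + 1)}

/-- `T` is a standard Young tableau of shape `θ⁽ⁿ⁾`: it is a bijective filling of the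
cells with `1, …, 2n+4` (and `0` elsewhere), strictly increasing along rows and
down columns. -/
def IsSYT (n : ℕ) (T : ℕ × ℕ → ℕ) : Prop :=
  (∀ c, c ∉ cells n → T c = 0) ∧
  Set.BijOn T (cells n) (Set.Icc 1 (2 * n + 4)) ∧
  (∀ c ∈ cells n, ∀ d ∈ cells n, c.1 = d.1 → c.2 < d.2 → T c < T d) ∧
  (∀ c ∈ cells n, ∀ d ∈ cells n, c.2 = d.2 → c.1 < d.1 → T c < T d)

/-- The value `m` appears in the arm (first row) of `T`. -/
def InArm (n : ℕ) (T : ℕ × ℕ → ℕ) (m : ℕ) : Prop := ∃ j ≤ n + 1, T (0, j) = m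

/-- The value `m` appears in the leg (first column) of `T`. -/
def InLeg (n : ℕ) (T : ℕ × ℕ → ℕ) (m : ℕ) : Prop := ∃ i ≤ n + 1, T (i, 0) = m

/-- The value `m` appears in the heart (the cell `(1,1)`) of `T`. -/
def InHeart (T : ℕ × ℕ → ℕ) (m : ℕ) : Prop := T (1, 1) = m

open Classical in
/-- The map ψ: the `i`-th letter (1-based, `i = k+1` for `k : Fin (2n+2)`) is determined by
the position of the entry `i+2` of `T`, and, if `i+2` is in the heart, by the position of `2`. -/
noncomputable def psi (n : ℕ) (T : ℕ × ℕ → ℕ) : List Step :=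
  List.ofFn (fun k : Fin (2 * n + 2) =>
    if InArm n T (k.val + 3) then Step.E
    else if InLeg n T (k.val + 3) then Step.N
    else if InHeart T (k.val + 3) ∧ InArm n T 2 then Step.S
    else Step.W)

/-- The 1-based index of the unique backwards step (`S` or `W`) of `w` (or `0` if none). -/
def backIdx (w : List Step) : ℕ :=
  match w.findIdx? (fun s => s == Step.S || s == Step.W) with
  | some k => k + 1
  | none => 0

/-- The values placed in the arm of `φ(w)`: the value `1`, the value `2` if the backwards
step of `w` is `S`, and `i+2` for each (1-based) index `i` with `pᵢ = E`. -/
def armVals (n : ℕ) (w : List Step) : Finset ℕ :=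
  insert 1 ((if Step.S ∈ w then {2} else ∅) ∪
    ((Finset.Icc 1 (2 * n + 2)).filter (fun i => w.getD (i - 1) Step.N = Step.E)).image
      (fun i => i + 2))

/-- The values placed in the leg of `φ(w)`: the value `1`, the value `2` if the backwards
step of `w` is `W`, and `i+2` for each (1-based) index `i` with `pᵢ = N`. -/
def legVals (n : ℕ) (w : List Step) : Finset ℕ :=
  insert 1 ((if Step.W ∈ w then {2} else ∅) ∪
    ((Finset.Icc 1 (2 * n + 2)).filter (fun i => w.getD (i - 1) Step.E = Step.N)).image
      (fun i => i + 2))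

/-- The map φ: place `j+2` in the heart where `p_j` is the backwards step, and fill the arm
(resp. leg) with `armVals` (resp. `legVals`) in increasing order along the row
(resp. down the column). -/
def phi (n : ℕ) (w : List Step) : ℕ × ℕ → ℕ := fun c =>
  if c = (1, 1) then backIdx w + 2
  else if c.1 = 0 ∧ c.2 ≤ n + 1 then ((armVals n w).sort (· ≤ ·)).getD c.2 0
  else if c.2 = 0 ∧ 1 ≤ c.1 ∧ c.1 ≤ n + 1 then ((legVals n w).sort (· ≤ ·)).getD c.1 0
  else 0

/-! ### Auxiliary lemmas -/

section Aux

lemma endpt_eq (w : List Step) :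
    endpt w = ((w.count Step.E : ℤ) - w.count Step.W, (w.count Step.N : ℤ) - w.count Step.S) := by
  induction w with
  | nil => simp [endpt]; rfl
  | cons a l ih =>
    have h : endpt (a :: l) = stepVec a + endpt l := by simp [endpt]
    rw [h, ih]
    cases a <;> simp [stepVec, List.count_cons, Prod.ext_iff] <;> ring

lemma length_eq_counts (w : List Step) :
    w.length = w.count Step.N + w.count Step.S + w.count Step.E + w.count Step.W := by
  induction w with
  | nil => simp
  | cons a l ih => cases a <;> simp [List.count_cons, ih] <;> ring

lemma count_eq_card_filter (w : List Step) (a d : Step) :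
    w.count a = ((Finset.range w.length).filter (fun i => w.getD i d = a)).card := by
  have key : ∀ (l : List Step),
      l.count a = ∑ i ∈ Finset.range l.length, if l.getD i d = a then 1 else 0 := by
    intro l
    induction l with
    | nil => simp
    | cons b t ih =>
      rw [List.count_cons, List.length_cons, Finset.sum_range_succ']
      simp only [List.getD_cons_succ, List.getD_cons_zero]
      rw [← ih]
      by_cases hb : b = a <;> simp [hb, beq_iff_eq]
  rw [key, Finset.card_filter]

lemma findIdx?_eq_some_of (l : List Step) (p : Step → Bool) (k : ℕ) (hk : k < l.length)
    (hp : p l[k]) (hmin : ∀ i (h : i < l.length), i < k → ¬ p l[i]) :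
    l.findIdx? p = some k := by
  rw [List.findIdx?_eq_some_iff_findIdx_eq]
  refine ⟨hk, ?_⟩
  rw [List.findIdx_eq hk]
  exact ⟨hp, fun j hj => by simpa using hmin j (hj.trans hk) hj⟩

/-- sorted access helpers -/
lemma sortGetD_mem {s : Finset ℕ} {k : ℕ} (h : k < s.card) :
    (s.sort (· ≤ ·)).getD k 0 ∈ s := by
  rw [List.getD_eq_getElem _ _ (by rwa [Finset.length_sort])]
  exact (Finset.mem_sort _).1 (List.getElem_mem _)

lemma sortGetD_lt {s : Finset ℕ} {k l : ℕ} (hkl : k < l) (h : l < s.card) :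
    (s.sort (· ≤ ·)).getD k 0 < (s.sort (· ≤ ·)).getD l 0 := by
  have hl : l < (s.sort (· ≤ ·)).length := by rwa [Finset.length_sort]
  have hk : k < (s.sort (· ≤ ·)).length := hkl.trans hl
  rw [List.getD_eq_getElem _ _ hk, List.getD_eq_getElem _ _ hl]
  exact (Finset.sortedLT_sort s).getElem_lt_getElem_of_lt hkl

lemma sortGetD_le {s : Finset ℕ} {k l : ℕ} (hkl : k ≤ l) (h : l < s.card) :
    (s.sort (· ≤ ·)).getD k 0 ≤ (s.sort (· ≤ ·)).getD l 0 := by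
  rcases hkl.lt_or_eq with h' | h'
  · exact (sortGetD_lt h' h).le
  · rw [h']

lemma sortGetD_surj {s : Finset ℕ} {m : ℕ} (hm : m ∈ s) :
    ∃ k, k < s.card ∧ (s.sort (· ≤ ·)).getD k 0 = m := by
  have : m ∈ s.sort (· ≤ ·) := (Finset.mem_sort _).2 hm
  obtain ⟨k, hk, hkm⟩ := List.mem_iff_getElem.1 this
  refine ⟨k, by rwa [Finset.length_sort] at hk, ?_⟩
  rw [List.getD_eq_getElem _ _ hk, hkm]

lemma sortGetD_zero {s : Finset ℕ} {m : ℕ} (hm : m ∈ s) (hmin : ∀ x ∈ s, m ≤ x) :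
    (s.sort (· ≤ ·)).getD 0 0 = m := by
  obtain ⟨k, hk, hkm⟩ := sortGetD_surj hm
  have h0 : (s.sort (· ≤ ·)).getD 0 0 ∈ s := sortGetD_mem (Nat.pos_of_ne_zero (by omega))
  exact le_antisymm (hkm ▸ sortGetD_le (Nat.zero_le k) hk) (hmin _ h0)

lemma sortGetD_one_le {s : Finset ℕ} {x : ℕ} (hx : x ∈ s)
    (hne : x ≠ (s.sort (· ≤ ·)).getD 0 0) :
    (s.sort (· ≤ ·)).getD 1 0 ≤ x := by
  obtain ⟨k, hk, hkm⟩ := sortGetD_surj hx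
  have hk1 : 1 ≤ k := by
    rcases Nat.eq_zero_or_pos k with h | h
    · exact absurd (h ▸ hkm).symm hne
    · exact h
  exact hkm ▸ sortGetD_le hk1 hk

lemma sortGetD_inj {s : Finset ℕ} {k l : ℕ} (hk : k < s.card) (hl : l < s.card)
    (h : (s.sort (· ≤ ·)).getD k 0 = (s.sort (· ≤ ·)).getD l 0) : k = l := by
  rcases lt_trichotomy k l with h' | h' | h'
  · exact absurd h (sortGetD_lt h' hl).ne
  · exact h'
  · exact absurd h.symm (sortGetD_lt h' hk).ne

end Aux

section Aux2

lemma path_counts {n : ℕ} {w : List Step} (hw : IsPath n w) :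
    (w.count Step.S = 1 ∧ w.count Step.W = 0 ∧ w.count Step.E = n ∧ w.count Step.N = n + 1) ∨
    (w.count Step.S = 0 ∧ w.count Step.W = 1 ∧ w.count Step.E = n + 1 ∧ w.count Step.N = n) := by
  obtain ⟨hlen, -, hend⟩ := hw
  have h1 := endpt_eq w
  rw [hend, Prod.ext_iff] at h1
  obtain ⟨hx, hy⟩ := h1
  have h2 := length_eq_counts w
  simp only at hx hy
  omega

lemma back_struct {n : ℕ} {w : List Step} (hw : IsPath n w) :
    ∃ k, ∃ hk : k < w.length, backIdx w = k + 1 ∧ (w[k] = Step.S ∨ w[k] = Step.W) ∧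
      (∀ i (h : i < w.length), i ≠ k → (w[i] = Step.E ∨ w[i] = Step.N)) := by
  classical
  have hcount := path_counts hw
  set L := w.length with hL
  have hS := count_eq_card_filter w Step.S Step.E
  have hW := count_eq_card_filter w Step.W Step.E
  set B := (Finset.range L).filter (fun i => w.getD i Step.E = Step.S ∨ w.getD i Step.E = Step.W)
    with hB
  have hBcard : B.card = 1 := by
    have : B = (Finset.range L).filter (fun i => w.getD i Step.E = Step.S) ∪
        (Finset.range L).filter (fun i => w.getD i Step.E = Step.W) := by
      rw [← Finset.filter_or]
    rw [this, Finset.card_union_of_disjoint, ← hS, ← hW]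
    · omega
    · rw [Finset.disjoint_filter]
      rintro i - h1 h2
      rw [h1] at h2
      exact Step.noConfusion h2
  obtain ⟨k, hk⟩ := Finset.card_eq_one.1 hBcard
  have hkB : k ∈ B := hk ▸ Finset.mem_singleton_self k
  rw [hB, Finset.mem_filter, Finset.mem_range] at hkB
  obtain ⟨hklt, hkback⟩ := hkB
  rw [List.getD_eq_getElem _ _ hklt] at hkback
  have hother : ∀ i (h : i < w.length), i ≠ k → (w[i] = Step.E ∨ w[i] = Step.N) := by
    intro i hi hik
    have : i ∉ B := by rw [hk, Finset.mem_singleton]; exact hik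
    rw [hB, Finset.mem_filter, Finset.mem_range] at this
    push_neg at this
    have h2 := this hi
    rw [List.getD_eq_getElem _ _ hi] at h2
    cases hwi : w[i] <;> simp [hwi] at h2 ⊢
  refine ⟨k, hklt, ?_, hkback, hother⟩
  have hfind : w.findIdx? (fun s => s == Step.S || s == Step.W) = some k := by
    apply findIdx?_eq_some_of _ _ _ hklt
    · rcases hkback with h | h <;> simp [h]
    · intro i hi hik
      rcases hother i hi (by omega) with h | h <;> simp [h]
  rw [backIdx, hfind]

lemma exists_N_before {n : ℕ} {w : List Step} (hw : IsPath n w) {k : ℕ} (hk : k < w.length)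
    (hback : w[k] = Step.S) :
    ∃ i, ∃ h : i < w.length, i < k ∧ w[i] = Step.N := by
  obtain ⟨-, hquad, -⟩ := hw
  have hq := (hquad (k + 1)).2
  set u := w.take (k + 1) with hu
  have hulen : u.length = k + 1 := by rw [hu, List.length_take]; omega
  have hSmem : Step.S ∈ u := by
    rw [List.mem_iff_getElem]
    exact ⟨k, by omega, by simp only [hu, List.getElem_take]; exact hback⟩
  have hSpos : 0 < u.count Step.S := List.count_pos_iff.2 hSmem
  rw [endpt_eq] at hq
  simp only at hq
  have hNpos : 0 < u.count Step.N := by omega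
  have hNmem : Step.N ∈ u := List.count_pos_iff.1 hNpos
  rw [List.mem_iff_getElem] at hNmem
  obtain ⟨i, hi, hiN⟩ := hNmem
  rw [hulen] at hi
  have hiw : i < w.length := by omega
  simp only [hu, List.getElem_take] at hiN
  have : i ≠ k := fun h => by subst h; rw [hback] at hiN; exact Step.noConfusion hiN
  exact ⟨i, hiw, by omega, hiN⟩

lemma exists_E_before {n : ℕ} {w : List Step} (hw : IsPath n w) {k : ℕ} (hk : k < w.length)
    (hback : w[k] = Step.W) :
    ∃ i, ∃ h : i < w.length, i < k ∧ w[i] = Step.E := by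
  obtain ⟨-, hquad, -⟩ := hw
  have hq := (hquad (k + 1)).1
  set u := w.take (k + 1) with hu
  have hulen : u.length = k + 1 := by rw [hu, List.length_take]; omega
  have hSmem : Step.W ∈ u := by
    rw [List.mem_iff_getElem]
    exact ⟨k, by omega, by simp only [hu, List.getElem_take]; exact hback⟩
  have hSpos : 0 < u.count Step.W := List.count_pos_iff.2 hSmem
  rw [endpt_eq] at hq
  simp only at hq
  have hNpos : 0 < u.count Step.E := by omega
  have hNmem : Step.E ∈ u := List.count_pos_iff.1 hNpos
  rw [List.mem_iff_getElem] at hNmem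
  obtain ⟨i, hi, hiN⟩ := hNmem
  rw [hulen] at hi
  have hiw : i < w.length := by omega
  simp only [hu, List.getElem_take] at hiN
  have : i ≠ k := fun h => by subst h; rw [hback] at hiN; exact Step.noConfusion hiN
  exact ⟨i, hiw, by omega, hiN⟩

end Aux2

section Aux3

lemma mem_armVals (n : ℕ) (w : List Step) (m : ℕ) :
    m ∈ armVals n w ↔ m = 1 ∨ (m = 2 ∧ Step.S ∈ w) ∨
      (3 ≤ m ∧ m ≤ 2 * n + 4 ∧ w.getD (m - 3) Step.N = Step.E) := by
  classical
  unfold armVals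
  by_cases hS : Step.S ∈ w <;>
    simp only [if_pos, if_neg, hS, Finset.mem_insert, Finset.mem_union, Finset.mem_singleton,
      Finset.notMem_empty, Finset.mem_image, Finset.mem_filter, Finset.mem_Icc, false_or,
      if_true, if_false, ite_true, ite_false] <;> constructor
  · rintro (rfl | rfl | ⟨i, ⟨⟨h1, h2⟩, h3⟩, rfl⟩)
    · exact Or.inl rfl
    · exact Or.inr (Or.inl ⟨rfl, trivial⟩)
    · refine Or.inr (Or.inr ⟨by omega, by omega, ?_⟩)
      have h4 : i + 2 - 3 = i - 1 := by omega
      rw [h4]; exact h3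
  · rintro (rfl | ⟨rfl, -⟩ | ⟨h1, h2, h3⟩)
    · exact Or.inl rfl
    · exact Or.inr (Or.inl rfl)
    · refine Or.inr (Or.inr ⟨m - 2, ⟨⟨by omega, by omega⟩, ?_⟩, by omega⟩)
      have h4 : m - 2 - 1 = m - 3 := by omega
      rw [h4]; exact h3
  · rintro (rfl | ⟨i, ⟨⟨h1, h2⟩, h3⟩, rfl⟩)
    · exact Or.inl rfl
    · refine Or.inr (Or.inr ⟨by omega, by omega, ?_⟩)
      have h4 : i + 2 - 3 = i - 1 := by omega
      rw [h4]; exact h3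
  · rintro (rfl | ⟨rfl, hS'⟩ | ⟨h1, h2, h3⟩)
    · exact Or.inl rfl
    · exact hS'.elim
    · refine Or.inr ⟨m - 2, ⟨⟨by omega, by omega⟩, ?_⟩, by omega⟩
      have h4 : m - 2 - 1 = m - 3 := by omega
      rw [h4]; exact h3

lemma mem_legVals (n : ℕ) (w : List Step) (m : ℕ) :
    m ∈ legVals n w ↔ m = 1 ∨ (m = 2 ∧ Step.W ∈ w) ∨
      (3 ≤ m ∧ m ≤ 2 * n + 4 ∧ w.getD (m - 3) Step.E = Step.N) := by
  classical
  unfold legVals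
  by_cases hS : Step.W ∈ w <;>
    simp only [if_pos, if_neg, hS, Finset.mem_insert, Finset.mem_union, Finset.mem_singleton,
      Finset.notMem_empty, Finset.mem_image, Finset.mem_filter, Finset.mem_Icc, false_or,
      if_true, if_false, ite_true, ite_false] <;> constructor
  · rintro (rfl | rfl | ⟨i, ⟨⟨h1, h2⟩, h3⟩, rfl⟩)
    · exact Or.inl rfl
    · exact Or.inr (Or.inl ⟨rfl, trivial⟩)
    · refine Or.inr (Or.inr ⟨by omega, by omega, ?_⟩)
      have h4 : i + 2 - 3 = i - 1 := by omega
      rw [h4]; exact h3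
  · rintro (rfl | ⟨rfl, -⟩ | ⟨h1, h2, h3⟩)
    · exact Or.inl rfl
    · exact Or.inr (Or.inl rfl)
    · refine Or.inr (Or.inr ⟨m - 2, ⟨⟨by omega, by omega⟩, ?_⟩, by omega⟩)
      have h4 : m - 2 - 1 = m - 3 := by omega
      rw [h4]; exact h3
  · rintro (rfl | ⟨i, ⟨⟨h1, h2⟩, h3⟩, rfl⟩)
    · exact Or.inl rfl
    · refine Or.inr (Or.inr ⟨by omega, by omega, ?_⟩)
      have h4 : i + 2 - 3 = i - 1 := by omega
      rw [h4]; exact h3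
  · rintro (rfl | ⟨rfl, hS'⟩ | ⟨h1, h2, h3⟩)
    · exact Or.inl rfl
    · exact hS'.elim
    · refine Or.inr ⟨m - 2, ⟨⟨by omega, by omega⟩, ?_⟩, by omega⟩
      have h4 : m - 2 - 1 = m - 3 := by omega
      rw [h4]; exact h3

lemma card_Icc_filter (n : ℕ) (w : List Step) (a d : Step) (hlen : w.length = 2 * n + 2) :
    ((Finset.Icc 1 (2 * n + 2)).filter (fun i => w.getD (i - 1) d = a)).card = w.count a := by
  rw [count_eq_card_filter w a d, hlen]
  apply Finset.card_nbij' (i := fun i => i - 1) (j := fun i => i + 1)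
  · intro i hi
    simp only [Finset.mem_coe, Finset.mem_filter, Finset.mem_Icc, Finset.mem_range] at *
    exact ⟨by omega, hi.2⟩
  · intro i hi
    simp only [Finset.mem_coe, Finset.mem_filter, Finset.mem_Icc, Finset.mem_range, Nat.add_sub_cancel] at *
    exact ⟨by omega, hi.2⟩
  · intro i hi
    simp only [Finset.mem_coe, Finset.mem_filter, Finset.mem_Icc] at hi
    dsimp only
    omega
  · intro i _
    dsimp only
    omega

lemma card_armVals {n : ℕ} {w : List Step} (hw : IsPath n w) : (armVals n w).card = n + 2 := by
  classical
  have hlen := hw.1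
  have himg := card_Icc_filter n w Step.E Step.N hlen
  unfold armVals
  have hinj : Function.Injective (fun i : ℕ => i + 2) := fun a b h => by have h' : a + 2 = b + 2 := h; omega
  have h1 : (1 : ℕ) ∉ ((if Step.S ∈ w then {2} else ∅) ∪
      ((Finset.Icc 1 (2 * n + 2)).filter (fun i => w.getD (i - 1) Step.N = Step.E)).image
        (fun i => i + 2)) := by
    intro h
    rcases Finset.mem_union.1 h with h | h
    · split_ifs at h <;> simp at h
    · obtain ⟨i, -, hi⟩ := Finset.mem_image.1 h
      have hi' : i + 2 = 1 := hi
      omega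
  have hdisj : Disjoint (if Step.S ∈ w then ({2} : Finset ℕ) else ∅)
      (((Finset.Icc 1 (2 * n + 2)).filter (fun i => w.getD (i - 1) Step.N = Step.E)).image
        (fun i => i + 2)) := by
    rw [Finset.disjoint_left]
    intro x hx hx'
    obtain ⟨i, himem, hi⟩ := Finset.mem_image.1 hx'
    rw [Finset.mem_filter, Finset.mem_Icc] at himem
    have hi' : i + 2 = x := hi
    split_ifs at hx <;> simp at hx
    omega
  rw [Finset.card_insert_of_notMem h1, Finset.card_union_of_disjoint hdisj,
    Finset.card_image_of_injective _ hinj, himg]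
  rcases path_counts hw with ⟨hS, hW, hE, hN⟩ | ⟨hS, hW, hE, hN⟩
  · have hSmem : Step.S ∈ w := List.count_pos_iff.1 (by omega)
    rw [if_pos hSmem, Finset.card_singleton, hE]; omega
  · have hSmem : Step.S ∉ w := List.count_eq_zero.1 hS
    rw [if_neg hSmem, Finset.card_empty, hE]; omega

lemma card_legVals {n : ℕ} {w : List Step} (hw : IsPath n w) : (legVals n w).card = n + 2 := by
  classical
  have hlen := hw.1
  have himg := card_Icc_filter n w Step.N Step.E hlen
  unfold legVals
  have hinj : Function.Injective (fun i : ℕ => i + 2) := fun a b h => by have h' : a + 2 = b + 2 := h; omega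
  have h1 : (1 : ℕ) ∉ ((if Step.W ∈ w then {2} else ∅) ∪
      ((Finset.Icc 1 (2 * n + 2)).filter (fun i => w.getD (i - 1) Step.E = Step.N)).image
        (fun i => i + 2)) := by
    intro h
    rcases Finset.mem_union.1 h with h | h
    · split_ifs at h <;> simp at h
    · obtain ⟨i, -, hi⟩ := Finset.mem_image.1 h
      have hi' : i + 2 = 1 := hi
      omega
  have hdisj : Disjoint (if Step.W ∈ w then ({2} : Finset ℕ) else ∅)
      (((Finset.Icc 1 (2 * n + 2)).filter (fun i => w.getD (i - 1) Step.E = Step.N)).image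
        (fun i => i + 2)) := by
    rw [Finset.disjoint_left]
    intro x hx hx'
    obtain ⟨i, himem, hi⟩ := Finset.mem_image.1 hx'
    rw [Finset.mem_filter, Finset.mem_Icc] at himem
    have hi' : i + 2 = x := hi
    split_ifs at hx <;> simp at hx
    omega
  rw [Finset.card_insert_of_notMem h1, Finset.card_union_of_disjoint hdisj,
    Finset.card_image_of_injective _ hinj, himg]
  rcases path_counts hw with ⟨hS, hW, hE, hN⟩ | ⟨hS, hW, hE, hN⟩
  · have hSmem : Step.W ∉ w := List.count_eq_zero.1 hW
    rw [if_neg hSmem, Finset.card_empty, hN]; omega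
  · have hSmem : Step.W ∈ w := List.count_pos_iff.1 (by omega)
    rw [if_pos hSmem, Finset.card_singleton, hN]; omega

end Aux3

section Aux4

lemma phi_heart (n : ℕ) (w : List Step) : phi n w (1, 1) = backIdx w + 2 := if_pos rfl

lemma phi_arm (n : ℕ) (w : List Step) {j : ℕ} (hj : j ≤ n + 1) :
    phi n w (0, j) = ((armVals n w).sort (· ≤ ·)).getD j 0 := by
  unfold phi
  rw [if_neg (by simp [Prod.ext_iff]), if_pos ⟨rfl, hj⟩]

lemma phi_leg (n : ℕ) (w : List Step) {i : ℕ} (hi1 : 1 ≤ i) (hi2 : i ≤ n + 1) :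
    phi n w (i, 0) = ((legVals n w).sort (· ≤ ·)).getD i 0 := by
  unfold phi
  rw [if_neg (by simp [Prod.ext_iff]), if_neg (by simp; omega), if_pos ⟨rfl, hi1, hi2⟩]

lemma phi_notcell (n : ℕ) (w : List Step) {c : ℕ × ℕ} (hc : c ∉ cells n) : phi n w c = 0 := by
  unfold cells at hc
  simp only [Set.mem_setOf_eq, not_or] at hc
  obtain ⟨h1, h2, h3⟩ := hc
  unfold phi
  rw [if_neg h2, if_neg h1, if_neg h3]

lemma armVals_min {n : ℕ} {w : List Step} : ∀ x ∈ armVals n w, 1 ≤ x := by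
  intro x hx
  rw [mem_armVals] at hx
  omega

lemma legVals_min {n : ℕ} {w : List Step} : ∀ x ∈ legVals n w, 1 ≤ x := by
  intro x hx
  rw [mem_legVals] at hx
  omega

lemma one_mem_armVals (n : ℕ) (w : List Step) : 1 ∈ armVals n w := by
  rw [mem_armVals]; exact Or.inl rfl

lemma one_mem_legVals (n : ℕ) (w : List Step) : 1 ∈ legVals n w := by
  rw [mem_legVals]; exact Or.inl rfl

lemma armSort_zero (n : ℕ) (w : List Step) :
    ((armVals n w).sort (· ≤ ·)).getD 0 0 = 1 :=
  sortGetD_zero (one_mem_armVals n w) armVals_min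

lemma legSort_zero (n : ℕ) (w : List Step) :
    ((legVals n w).sort (· ≤ ·)).getD 0 0 = 1 :=
  sortGetD_zero (one_mem_legVals n w) legVals_min

lemma heart_not_mem_armVals {n : ℕ} {w : List Step} (hw : IsPath n w) {k : ℕ}
    (hk : k < w.length) (hback : w[k] = Step.S ∨ w[k] = Step.W) :
    k + 3 ∉ armVals n w := by
  rw [mem_armVals]
  rintro (h | h | ⟨-, -, h⟩)
  · omega
  · omega
  · have h4 : k + 3 - 3 = k := by omega
    rw [h4, List.getD_eq_getElem _ _ hk] at h
    rcases hback with hb | hb <;> rw [hb] at h <;> exact Step.noConfusion h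

lemma heart_not_mem_legVals {n : ℕ} {w : List Step} (hw : IsPath n w) {k : ℕ}
    (hk : k < w.length) (hback : w[k] = Step.S ∨ w[k] = Step.W) :
    k + 3 ∉ legVals n w := by
  rw [mem_legVals]
  rintro (h | h | ⟨-, -, h⟩)
  · omega
  · omega
  · have h4 : k + 3 - 3 = k := by omega
    rw [h4, List.getD_eq_getElem _ _ hk] at h
    rcases hback with hb | hb <;> rw [hb] at h <;> exact Step.noConfusion h

lemma vals_cover {n : ℕ} {w : List Step} (hw : IsPath n w) {k : ℕ}
    (hk : k < w.length) (hother : ∀ i (h : i < w.length), i ≠ k → (w[i] = Step.E ∨ w[i] = Step.N))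
    {m : ℕ} (h1 : 1 ≤ m) (h2 : m ≤ 2 * n + 4) :
    m ∈ armVals n w ∨ m ∈ legVals n w ∨ m = k + 3 := by
  have hlen := hw.1
  rcases Nat.lt_or_ge m 3 with h3 | h3
  · have hm12 : m = 1 ∨ m = 2 := by omega
    rcases hm12 with rfl | rfl
    · exact Or.inl (one_mem_armVals n w)
    · rcases path_counts hw with ⟨hS, -, -, -⟩ | ⟨-, hW, -, -⟩
      · refine Or.inl ?_
        rw [mem_armVals]
        exact Or.inr (Or.inl ⟨rfl, List.count_pos_iff.1 (by omega)⟩)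
      · refine Or.inr (Or.inl ?_)
        rw [mem_legVals]
        exact Or.inr (Or.inl ⟨rfl, List.count_pos_iff.1 (by omega)⟩)
  · have hmlt : m - 3 < w.length := by omega
    by_cases hmk : m - 3 = k
    · exact Or.inr (Or.inr (by omega))
    · rcases hother (m - 3) hmlt hmk with h | h
      · refine Or.inl ?_
        rw [mem_armVals]
        exact Or.inr (Or.inr ⟨h3, h2, by rw [List.getD_eq_getElem _ _ hmlt]; exact h⟩)
      · refine Or.inr (Or.inl ?_)
        rw [mem_legVals]
        exact Or.inr (Or.inr ⟨h3, h2, by rw [List.getD_eq_getElem _ _ hmlt]; exact h⟩)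

lemma vals_inter {n : ℕ} {w : List Step} (hw : IsPath n w) {m : ℕ}
    (ha : m ∈ armVals n w) (hl : m ∈ legVals n w) : m = 1 := by
  rw [mem_armVals] at ha
  rw [mem_legVals] at hl
  rcases ha with rfl | ⟨rfl, hS⟩ | ⟨h3, h4, hE⟩
  · rfl
  · rcases hl with h | ⟨-, hW⟩ | ⟨h3, -, -⟩
    · omega
    · rcases path_counts hw with ⟨-, hW0, -, -⟩ | ⟨hS0, -, -, -⟩
      · exact absurd hW (List.count_eq_zero.1 hW0)
      · exact absurd hS (List.count_eq_zero.1 hS0)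
    · omega
  · rcases hl with rfl | ⟨rfl, -⟩ | ⟨-, -, hN⟩
    · omega
    · omega
    · have hlen := hw.1
      have hlt : m - 3 < w.length := by omega
      rw [List.getD_eq_getElem _ _ hlt] at hE hN
      rw [hE] at hN
      exact Step.noConfusion hN

lemma armSort_one_lt {n : ℕ} {w : List Step} (hw : IsPath n w) {k : ℕ}
    (hk : k < w.length) (hback : w[k] = Step.S ∨ w[k] = Step.W) :
    ((armVals n w).sort (· ≤ ·)).getD 1 0 < k + 3 := by
  rcases hback with hb | hb
  · -- S case: 2 ∈ armVals
    have h2 : 2 ∈ armVals n w := by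
      rw [mem_armVals]
      exact Or.inr (Or.inl ⟨rfl, hb ▸ List.getElem_mem hk⟩)
    have := sortGetD_one_le h2 (by rw [armSort_zero]; omega)
    omega
  · -- W case: some E before k
    obtain ⟨i, hi, hik, hiE⟩ := exists_E_before hw hk hb
    have hx : i + 3 ∈ armVals n w := by
      rw [mem_armVals]
      refine Or.inr (Or.inr ⟨by omega, by have := hw.1; omega, ?_⟩)
      have h4 : i + 3 - 3 = i := by omega
      rw [h4, List.getD_eq_getElem _ _ hi]
      exact hiE
    have := sortGetD_one_le hx (by rw [armSort_zero]; omega)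
    omega

lemma legSort_one_lt {n : ℕ} {w : List Step} (hw : IsPath n w) {k : ℕ}
    (hk : k < w.length) (hback : w[k] = Step.S ∨ w[k] = Step.W) :
    ((legVals n w).sort (· ≤ ·)).getD 1 0 < k + 3 := by
  rcases hback with hb | hb
  · obtain ⟨i, hi, hik, hiN⟩ := exists_N_before hw hk hb
    have hx : i + 3 ∈ legVals n w := by
      rw [mem_legVals]
      refine Or.inr (Or.inr ⟨by omega, by have := hw.1; omega, ?_⟩)
      have h4 : i + 3 - 3 = i := by omega
      rw [h4, List.getD_eq_getElem _ _ hi]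
      exact hiN
    have := sortGetD_one_le hx (by rw [legSort_zero]; omega)
    omega
  · have h2 : 2 ∈ legVals n w := by
      rw [mem_legVals]
      exact Or.inr (Or.inl ⟨rfl, hb ▸ List.getElem_mem hk⟩)
    have := sortGetD_one_le h2 (by rw [legSort_zero]; omega)
    omega

end Aux4

section Aux5

lemma cell_arm {n : ℕ} (j : ℕ) (hj : j ≤ n + 1) : ((0, j) : ℕ × ℕ) ∈ cells n :=
  Or.inl ⟨rfl, hj⟩

lemma cell_heart {n : ℕ} : ((1, 1) : ℕ × ℕ) ∈ cells n := Or.inr (Or.inl rfl)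

lemma cell_leg {n : ℕ} (i : ℕ) (hi1 : 1 ≤ i) (hi2 : i ≤ n + 1) : ((i, 0) : ℕ × ℕ) ∈ cells n :=
  Or.inr (Or.inr ⟨rfl, hi1, hi2⟩)

lemma armVals_bounds {n : ℕ} {w : List Step} {x : ℕ} (hx : x ∈ armVals n w) :
    1 ≤ x ∧ x ≤ 2 * n + 4 := by
  rw [mem_armVals] at hx; omega

lemma legVals_bounds {n : ℕ} {w : List Step} {x : ℕ} (hx : x ∈ legVals n w) :
    1 ≤ x ∧ x ≤ 2 * n + 4 := by
  rw [mem_legVals] at hx; omega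

lemma isSYT_phi {n : ℕ} {w : List Step} (hw : IsPath n w) : IsSYT n (phi n w) := by
  obtain ⟨k, hk, hbIdx, hback, hother⟩ := back_struct hw
  have hlen := hw.1
  have hcardA : (armVals n w).card = n + 2 := card_armVals hw
  have hcardL : (legVals n w).card = n + 2 := card_legVals hw
  have hheartA := heart_not_mem_armVals hw hk hback
  have hheartL := heart_not_mem_legVals hw hk hback
  have hphiH : phi n w (1, 1) = k + 3 := by rw [phi_heart, hbIdx]
  have harm : ∀ j, j ≤ n + 1 → phi n w (0, j) ∈ armVals n w := by
    intro j hj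
    rw [phi_arm n w hj]
    exact sortGetD_mem (by omega)
  have hleg : ∀ i, 1 ≤ i → i ≤ n + 1 → phi n w (i, 0) ∈ legVals n w := by
    intro i hi1 hi2
    rw [phi_leg n w hi1 hi2]
    exact sortGetD_mem (by omega)
  refine ⟨fun c hc => phi_notcell n w hc, ⟨?_, ?_, ?_⟩, ?_, ?_⟩
  · -- MapsTo
    rintro c (⟨hc1, hc2⟩ | rfl | ⟨hc1, hc2, hc3⟩)
    · have hc : c = (0, c.2) := Prod.ext hc1 rfl
      rw [hc, Set.mem_Icc]
      have := armVals_bounds (harm c.2 hc2)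
      omega
    · rw [hphiH, Set.mem_Icc]
      omega
    · have hc : c = (c.1, 0) := Prod.ext rfl hc1
      rw [hc, Set.mem_Icc]
      have := legVals_bounds (hleg c.1 hc2 hc3)
      omega
  · -- InjOn
    rintro c (⟨hc1, hc2⟩ | rfl | ⟨hc1, hc2, hc3⟩) d (⟨hd1, hd2⟩ | rfl | ⟨hd1, hd2, hd3⟩) heq
    -- arm arm
    · have hc : c = (0, c.2) := Prod.ext hc1 rfl
      have hd : d = (0, d.2) := Prod.ext hd1 rfl
      rw [hc, hd, phi_arm n w hc2, phi_arm n w hd2] at heq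
      have := sortGetD_inj (s := armVals n w) (by omega) (by omega) heq
      rw [hc, hd, this]
    -- arm heart
    · exfalso
      have hc : c = (0, c.2) := Prod.ext hc1 rfl
      rw [hc, hphiH] at heq
      exact hheartA (heq ▸ harm c.2 hc2)
    -- arm leg
    · exfalso
      have hc : c = (0, c.2) := Prod.ext hc1 rfl
      have hd : d = (d.1, 0) := Prod.ext rfl hd1
      have hmem1 := harm c.2 hc2
      have hmem2 := hleg d.1 hd2 hd3
      rw [hc, hd] at heq
      rw [← heq] at hmem2
      have h1 : phi n w (0, c.2) = 1 := vals_inter hw hmem1 hmem2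
      have h2 : ((legVals n w).sort (· ≤ ·)).getD d.1 0 = 1 := by
        rw [← phi_leg n w hd2 hd3, ← heq]; exact h1
      rw [← legSort_zero n w] at h2
      have := sortGetD_inj (s := legVals n w) (by omega) (by omega) h2
      omega
    -- heart arm
    · exfalso
      have hd : d = (0, d.2) := Prod.ext hd1 rfl
      rw [hd, hphiH] at heq
      exact hheartA (heq ▸ harm d.2 hd2)
    -- heart heart
    · rfl
    -- heart leg
    · exfalso
      have hd : d = (d.1, 0) := Prod.ext rfl hd1
      rw [hd, hphiH] at heq
      exact hheartL (heq ▸ hleg d.1 hd2 hd3)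
    -- leg arm
    · exfalso
      have hc : c = (c.1, 0) := Prod.ext rfl hc1
      have hd : d = (0, d.2) := Prod.ext hd1 rfl
      have hmem1 := harm d.2 hd2
      have hmem2 := hleg c.1 hc2 hc3
      rw [hc, hd] at heq
      rw [← heq] at hmem1
      have h1 : phi n w (c.1, 0) = 1 := vals_inter hw hmem1 hmem2
      rw [phi_leg n w hc2 hc3] at h1
      rw [← legSort_zero n w] at h1
      have := sortGetD_inj (s := legVals n w) (by omega) (by omega) h1
      omega
    -- leg heart
    · exfalso
      have hc : c = (c.1, 0) := Prod.ext rfl hc1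
      rw [hc, hphiH] at heq
      exact hheartL (heq ▸ hleg c.1 hc2 hc3)
    -- leg leg
    · have hc : c = (c.1, 0) := Prod.ext rfl hc1
      have hd : d = (d.1, 0) := Prod.ext rfl hd1
      rw [hc, hd, phi_leg n w hc2 hc3, phi_leg n w hd2 hd3] at heq
      have := sortGetD_inj (s := legVals n w) (by omega) (by omega) heq
      rw [hc, hd, this]
  · -- SurjOn
    intro m hm
    rw [Set.mem_Icc] at hm
    rcases vals_cover hw hk hother hm.1 hm.2 with hmem | hmem | rfl
    · obtain ⟨j, hj, hjm⟩ := sortGetD_surj hmem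
      exact ⟨(0, j), cell_arm j (by omega), by rw [phi_arm n w (by omega : j ≤ n + 1)]; exact hjm⟩
    · obtain ⟨i, hi, him⟩ := sortGetD_surj hmem
      rcases Nat.eq_zero_or_pos i with rfl | hipos
      · refine ⟨(0, 0), cell_arm 0 (by omega), ?_⟩
        rw [phi_arm n w (by omega : (0:ℕ) ≤ n + 1), armSort_zero, ← him, legSort_zero]
      · refine ⟨(i, 0), cell_leg i hipos (by omega), ?_⟩
        rw [phi_leg n w hipos (by omega)]
        exact him
    · exact ⟨(1, 1), cell_heart, hphiH⟩
  · -- rows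
    rintro c (⟨hc1, hc2⟩ | rfl | ⟨hc1, hc2, hc3⟩) d (⟨hd1, hd2⟩ | rfl | ⟨hd1, hd2, hd3⟩) h1 h2
    · have hc : c = (0, c.2) := Prod.ext hc1 rfl
      have hd : d = (0, d.2) := Prod.ext hd1 rfl
      rw [hc, hd, phi_arm n w hc2, phi_arm n w hd2]
      exact sortGetD_lt h2 (by omega)
    · exfalso; rw [hc1] at h1; simp at h1
    · omega
    · exfalso; rw [hd1] at h1; simp at h1
    · omega
    · simp at h2; omega
    · omega
    · -- c leg, d heart: c = (1, 0)
      have hc1' : c.1 = 1 := by simp at h1; omega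
      have hc : c = (1, 0) := Prod.ext hc1' hc1
      rw [hc, hphiH, phi_leg n w le_rfl (by omega)]
      exact legSort_one_lt hw hk hback
    · omega
  · -- cols
    rintro c (⟨hc1, hc2⟩ | rfl | ⟨hc1, hc2, hc3⟩) d (⟨hd1, hd2⟩ | rfl | ⟨hd1, hd2, hd3⟩) h1 h2
    · omega
    · -- c arm, d heart : c = (0, 1)
      have hc2' : c.2 = 1 := by simp at h1; omega
      have hc : c = (0, 1) := Prod.ext hc1 hc2'
      rw [hc, hphiH, phi_arm n w (by omega : (1:ℕ) ≤ n + 1)]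
      exact armSort_one_lt hw hk hback
    · -- c arm, d leg : c = (0, 0)
      have hc2' : c.2 = 0 := by omega
      have hc : c = (0, 0) := Prod.ext hc1 hc2'
      have hd : d = (d.1, 0) := Prod.ext rfl hd1
      rw [hc, hd, phi_arm n w (by omega : (0:ℕ) ≤ n + 1), armSort_zero, phi_leg n w hd2 hd3,
        ← legSort_zero n w]
      exact sortGetD_lt (by omega) (by omega)
    · exfalso; rw [hd1] at h2; simp at h2
    · omega
    · simp at h1; omega
    · omega
    · simp at h1; omega
    · have hc : c = (c.1, 0) := Prod.ext rfl hc1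
      have hd : d = (d.1, 0) := Prod.ext rfl hd1
      rw [hc, hd, phi_leg n w hc2 hc3, phi_leg n w hd2 hd3]
      exact sortGetD_lt h2 (by omega)

end Aux5

section Aux6

lemma psi_length (n : ℕ) (T : ℕ × ℕ → ℕ) : (psi n T).length = 2 * n + 2 := by
  simp [psi]

open Classical in
lemma psi_getElem (n : ℕ) (T : ℕ × ℕ → ℕ) (kk : ℕ) (h : kk < (psi n T).length) :
    (psi n T)[kk] = if InArm n T (kk + 3) then Step.E
      else if InLeg n T (kk + 3) then Step.N
      else if InHeart T (kk + 3) ∧ InArm n T 2 then Step.S else Step.W := by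
  simp only [psi, List.getElem_ofFn]

lemma inArm_phi {n : ℕ} {w : List Step} (hw : IsPath n w) (m : ℕ) :
    InArm n (phi n w) m ↔ m ∈ armVals n w := by
  have hcardA := card_armVals hw
  constructor
  · rintro ⟨j, hj, hval⟩
    rw [phi_arm n w hj] at hval
    exact hval ▸ sortGetD_mem (by omega)
  · intro hm
    obtain ⟨j, hj, hjm⟩ := sortGetD_surj hm
    exact ⟨j, by omega, by rw [phi_arm n w (by omega : j ≤ n + 1)]; exact hjm⟩

lemma inLeg_phi {n : ℕ} {w : List Step} (hw : IsPath n w) (m : ℕ) :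
    InLeg n (phi n w) m ↔ m ∈ legVals n w := by
  have hcardL := card_legVals hw
  constructor
  · rintro ⟨i, hi, hval⟩
    rcases Nat.eq_zero_or_pos i with rfl | hip
    · rw [phi_arm n w (Nat.zero_le _), armSort_zero] at hval
      exact hval ▸ one_mem_legVals n w
    · rw [phi_leg n w hip hi] at hval
      exact hval ▸ sortGetD_mem (by omega)
  · intro hm
    obtain ⟨i, hi, him⟩ := sortGetD_surj hm
    rcases Nat.eq_zero_or_pos i with rfl | hip
    · exact ⟨0, by omega, by rw [phi_arm n w (Nat.zero_le _), armSort_zero, ← him, legSort_zero]⟩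
    · exact ⟨i, by omega, by rw [phi_leg n w hip (by omega : i ≤ n + 1)]; exact him⟩

lemma psi_phi {n : ℕ} {w : List Step} (hw : IsPath n w) : psi n (phi n w) = w := by
  obtain ⟨k, hk, hbIdx, hback, hother⟩ := back_struct hw
  have hlen := hw.1
  have hphiH : phi n w (1, 1) = k + 3 := by rw [phi_heart, hbIdx]
  apply List.ext_getElem
  · rw [psi_length, hlen]
  intro kk h1 h2
  rw [psi_getElem]
  by_cases hkkk : kk = k
  · subst hkkk
    have hnotA : ¬ InArm n (phi n w) (kk + 3) := by
      rw [inArm_phi hw]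
      exact heart_not_mem_armVals hw hk hback
    have hnotL : ¬ InLeg n (phi n w) (kk + 3) := by
      rw [inLeg_phi hw]
      exact heart_not_mem_legVals hw hk hback
    have hHeart : InHeart (phi n w) (kk + 3) := hphiH
    rcases hback with hb | hb
    · have h2A : InArm n (phi n w) 2 := by
        rw [inArm_phi hw, mem_armVals]
        exact Or.inr (Or.inl ⟨rfl, hb ▸ List.getElem_mem hk⟩)
      rw [if_neg hnotA, if_neg hnotL, if_pos ⟨hHeart, h2A⟩]
      exact hb.symm
    · have hSnot : Step.S ∉ w := by
        rcases path_counts hw with ⟨-, hW0, -, -⟩ | ⟨hS0, -, -, -⟩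
        · exact absurd (hb ▸ List.getElem_mem hk) (List.count_eq_zero.1 hW0)
        · exact List.count_eq_zero.1 hS0
      have h2A : ¬ InArm n (phi n w) 2 := by
        rw [inArm_phi hw, mem_armVals]
        rintro (h | ⟨-, h⟩ | h) <;> first | omega | exact hSnot h
      rw [if_neg hnotA, if_neg hnotL, if_neg (fun hcon => h2A hcon.2)]
      exact hb.symm
  · rcases hother kk h2 hkkk with hE | hN
    · have hA : InArm n (phi n w) (kk + 3) := by
        rw [inArm_phi hw, mem_armVals]
        refine Or.inr (Or.inr ⟨by omega, by omega, ?_⟩)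
        have h4 : kk + 3 - 3 = kk := by omega
        rw [h4, List.getD_eq_getElem _ _ h2]
        exact hE
      rw [if_pos hA]
      exact hE.symm
    · have hnotA : ¬ InArm n (phi n w) (kk + 3) := by
        rw [inArm_phi hw, mem_armVals]
        rintro (h | h | ⟨-, -, h⟩)
        · omega
        · omega
        · have h4 : kk + 3 - 3 = kk := by omega
          rw [h4, List.getD_eq_getElem _ _ h2, hN] at h
          exact Step.noConfusion h
      have hL : InLeg n (phi n w) (kk + 3) := by
        rw [inLeg_phi hw, mem_legVals]
        refine Or.inr (Or.inr ⟨by omega, by omega, ?_⟩)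
        have h4 : kk + 3 - 3 = kk := by omega
        rw [h4, List.getD_eq_getElem _ _ h2]
        exact hN
      rw [if_neg hnotA, if_pos hL]
      exact hN.symm

end Aux6

section Aux7

variable {n : ℕ} {T : ℕ × ℕ → ℕ}

lemma T_lt_of_ne (hT : IsSYT n T) : ∀ c ∈ cells n, c ≠ ((0, 0) : ℕ × ℕ) → T (0, 0) < T c := by
  obtain ⟨hzero, ⟨hmaps, hinj, hsurj⟩, hrow, hcol⟩ := hT
  rintro c (⟨hc1, hc2⟩ | rfl | ⟨hc1, hc2, hc3⟩) hne
  · have hc2pos : 1 ≤ c.2 := by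
      rcases Nat.eq_zero_or_pos c.2 with h | h
      · exact absurd (Prod.ext hc1 h) hne
      · exact h
    exact hrow (0, 0) (cell_arm 0 (by omega)) c (Or.inl ⟨hc1, hc2⟩) (by rw [hc1])
      (by simp; omega)
  · have h01 := hrow (0, 0) (cell_arm 0 (by omega)) (0, 1) (cell_arm 1 (by omega)) rfl
      (by simp)
    have h11 := hcol (0, 1) (cell_arm 1 (by omega)) (1, 1) cell_heart rfl (by simp)
    omega
  · exact hcol (0, 0) (cell_arm 0 (by omega)) c (Or.inr (Or.inr ⟨hc1, hc2, hc3⟩))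
      (by rw [hc1]) (by simp; omega)

lemma T_zero_zero (hT : IsSYT n T) : T (0, 0) = 1 := by
  obtain ⟨c, hc, hc1⟩ := hT.2.1.2.2 (Set.mem_Icc.2 ⟨le_rfl, by omega⟩)
  by_cases h : c = ((0, 0) : ℕ × ℕ)
  · rw [← hc1, h]
  · have h1 := T_lt_of_ne hT c hc h
    have h2 : 1 ≤ T (0, 0) :=
      (Set.mem_Icc.1 (hT.2.1.1 (cell_arm 0 (by omega)))).1
    omega

lemma T_heart_bounds (hT : IsSYT n T) : 4 ≤ T (1, 1) ∧ T (1, 1) ≤ 2 * n + 4 := by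
  have h00 := T_zero_zero hT
  obtain ⟨hzero, ⟨hmaps, hinj, hsurj⟩, hrow, hcol⟩ := hT
  have h01 : T (0, 0) < T (0, 1) :=
    hrow (0, 0) (cell_arm 0 (by omega)) (0, 1) (cell_arm 1 (by omega)) rfl (by simp)
  have h10 : T (0, 0) < T (1, 0) :=
    hcol (0, 0) (cell_arm 0 (by omega)) (1, 0) (cell_leg 1 le_rfl (by omega)) rfl (by simp)
  have h11a : T (0, 1) < T (1, 1) :=
    hcol (0, 1) (cell_arm 1 (by omega)) (1, 1) cell_heart rfl (by simp)
  have h11b : T (1, 0) < T (1, 1) :=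
    hrow (1, 0) (cell_leg 1 le_rfl (by omega)) (1, 1) cell_heart rfl (by simp)
  have hne : T (0, 1) ≠ T (1, 0) := by
    intro h
    have := hinj (cell_arm 1 (by omega)) (cell_leg 1 le_rfl (by omega)) h
    simp [Prod.ext_iff] at this
  have hb := Set.mem_Icc.1 (hmaps cell_heart)
  omega

lemma T_arm_two (hT : IsSYT n T) {j : ℕ} (hj : j ≤ n + 1) (h2 : T (0, j) = 2) : j = 1 := by
  have h00 := T_zero_zero hT
  obtain ⟨hzero, ⟨hmaps, hinj, hsurj⟩, hrow, hcol⟩ := hT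
  have hj1 : 1 ≤ j := by
    rcases Nat.eq_zero_or_pos j with rfl | h
    · omega
    · exact h
  by_contra hne
  have hj2 : 2 ≤ j := by omega
  have ha : T (0, 0) < T (0, 1) :=
    hrow (0, 0) (cell_arm 0 (by omega)) (0, 1) (cell_arm 1 (by omega)) rfl (by simp)
  have hb : T (0, 1) < T (0, j) :=
    hrow (0, 1) (cell_arm 1 (by omega)) (0, j) (cell_arm j hj) rfl (by simp; omega)
  omega

lemma T_leg_two (hT : IsSYT n T) {i : ℕ} (hi : i ≤ n + 1) (h2 : T (i, 0) = 2) : i = 1 := by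
  have h00 := T_zero_zero hT
  obtain ⟨hzero, ⟨hmaps, hinj, hsurj⟩, hrow, hcol⟩ := hT
  have hi1 : 1 ≤ i := by
    rcases Nat.eq_zero_or_pos i with rfl | h
    · omega
    · exact h
  by_contra hne
  have hi2 : 2 ≤ i := by omega
  have ha : T (0, 0) < T (1, 0) :=
    hcol (0, 0) (cell_arm 0 (by omega)) (1, 0) (cell_leg 1 le_rfl (by omega)) rfl (by simp)
  have hb : T (1, 0) < T (i, 0) :=
    hcol (1, 0) (cell_leg 1 le_rfl (by omega)) (i, 0) (cell_leg i hi1 hi) rfl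
      (by simp; omega)
  omega

lemma T_two_loc (hT : IsSYT n T) : (T (0, 1) = 2 ∧ T (1, 0) ≠ 2) ∨ (T (1, 0) = 2 ∧ T (0, 1) ≠ 2) := by
  have hheart := T_heart_bounds hT
  have hboth : ¬ (T (0, 1) = 2 ∧ T (1, 0) = 2) := by
    rintro ⟨h1, h2⟩
    have := hT.2.1.2.1 (cell_arm 1 (by omega)) (cell_leg 1 le_rfl (by omega)) (h1.trans h2.symm)
    simp [Prod.ext_iff] at this
  obtain ⟨c, hc, hc2⟩ := hT.2.1.2.2 (Set.mem_Icc.2 ⟨by omega, by omega⟩ :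
    (2 : ℕ) ∈ Set.Icc 1 (2 * n + 4))
  rcases hc with ⟨hc1, hc2'⟩ | rfl | ⟨hc1, hc2', hc3⟩
  · have hcc : c = (0, c.2) := Prod.ext hc1 rfl
    rw [hcc] at hc2
    have := T_arm_two hT hc2' hc2
    rw [this] at hc2
    exact Or.inl ⟨hc2, fun h => hboth ⟨hc2, h⟩⟩
  · omega
  · have hcc : c = (c.1, 0) := Prod.ext rfl hc1
    rw [hcc] at hc2
    have := T_leg_two hT hc3 hc2
    rw [this] at hc2
    exact Or.inr ⟨hc2, fun h => hboth ⟨h, hc2⟩⟩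

lemma inArm_two (hT : IsSYT n T) : InArm n T 2 ↔ T (0, 1) = 2 := by
  constructor
  · rintro ⟨j, hj, hval⟩
    have h1 := T_arm_two hT hj hval
    subst h1
    exact hval
  · intro h
    exact ⟨1, by omega, h⟩

lemma inLeg_two (hT : IsSYT n T) : InLeg n T 2 ↔ T (1, 0) = 2 := by
  constructor
  · rintro ⟨i, hi, hval⟩
    have h1 := T_leg_two hT hi hval
    subst h1
    exact hval
  · intro h
    exact ⟨1, by omega, h⟩

lemma not_inArm_heart (hT : IsSYT n T) {m : ℕ} (hm : m = T (1, 1)) : ¬ InArm n T m := by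
  rintro ⟨j, hj, hval⟩
  have := hT.2.1.2.1 (cell_arm j hj) cell_heart (by rw [hval, hm])
  simp [Prod.ext_iff] at this

lemma cell_leg0 {n : ℕ} (i : ℕ) (hi : i ≤ n + 1) : ((i, 0) : ℕ × ℕ) ∈ cells n := by
  rcases Nat.eq_zero_or_pos i with rfl | h
  · exact cell_arm 0 (by omega)
  · exact cell_leg i h hi

lemma not_inLeg_heart (hT : IsSYT n T) {m : ℕ} (hm : m = T (1, 1)) : ¬ InLeg n T m := by
  rintro ⟨i, hi, hval⟩
  have := hT.2.1.2.1 (cell_leg0 i hi) cell_heart (by rw [hval, hm])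
  simp [Prod.ext_iff] at this

lemma not_both (hT : IsSYT n T) {m : ℕ} (hm : 2 ≤ m) (ha : InArm n T m) (hl : InLeg n T m) :
    False := by
  obtain ⟨j, hj, hja⟩ := ha
  obtain ⟨i, hi, hil⟩ := hl
  have heq := hT.2.1.2.1 (cell_arm j hj) (cell_leg0 i hi) (by rw [hja, hil])
  rw [Prod.ext_iff] at heq
  simp only at heq
  obtain ⟨h1, h2⟩ := heq
  subst h2
  rw [T_zero_zero hT] at hja
  omega

lemma T_cover (hT : IsSYT n T) {m : ℕ} (h3 : 3 ≤ m) (h4 : m ≤ 2 * n + 4) :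
    InArm n T m ∨ InLeg n T m ∨ m = T (1, 1) := by
  obtain ⟨c, hc, hcm⟩ := hT.2.1.2.2 (Set.mem_Icc.2 ⟨by omega, h4⟩ : m ∈ Set.Icc 1 (2 * n + 4))
  rcases hc with ⟨hc1, hc2⟩ | rfl | ⟨hc1, hc2, hc3⟩
  · have hcc : c = (0, c.2) := Prod.ext hc1 rfl
    rw [hcc] at hcm
    exact Or.inl ⟨c.2, hc2, hcm⟩
  · exact Or.inr (Or.inr hcm.symm)
  · have hcc : c = (c.1, 0) := Prod.ext rfl hc1
    rw [hcc] at hcm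
    exact Or.inr (Or.inl ⟨c.1, hc3, hcm⟩)

end Aux7

section Aux8

variable {n : ℕ} {T : ℕ × ℕ → ℕ}

lemma psi_letter_S (hT : IsSYT n T) : Step.S ∈ psi n T ↔ T (0, 1) = 2 := by
  constructor
  · intro h
    obtain ⟨kk, hkk, heq⟩ := List.mem_iff_getElem.1 h
    rw [psi_getElem n T kk hkk] at heq
    by_cases h1 : InArm n T (kk + 3)
    · rw [if_pos h1] at heq; exact Step.noConfusion heq
    by_cases h2 : InLeg n T (kk + 3)
    · rw [if_neg h1, if_pos h2] at heq; exact Step.noConfusion heq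
    by_cases h3 : InHeart T (kk + 3) ∧ InArm n T 2
    · exact (inArm_two hT).1 h3.2
    · rw [if_neg h1, if_neg h2, if_neg h3] at heq; exact Step.noConfusion heq
  · intro h
    have hb := T_heart_bounds hT
    have hkk : T (1, 1) - 3 < (psi n T).length := by rw [psi_length]; omega
    refine List.mem_iff_getElem.2 ⟨T (1, 1) - 3, hkk, ?_⟩
    rw [psi_getElem n T _ hkk]
    have hm3 : T (1, 1) - 3 + 3 = T (1, 1) := by omega
    rw [hm3, if_neg (not_inArm_heart hT rfl), if_neg (not_inLeg_heart hT rfl),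
      if_pos ⟨rfl, (inArm_two hT).2 h⟩]

lemma psi_letter_W (hT : IsSYT n T) : Step.W ∈ psi n T ↔ T (1, 0) = 2 := by
  constructor
  · intro h
    obtain ⟨kk, hkk, heq⟩ := List.mem_iff_getElem.1 h
    have hkk' : kk < 2 * n + 2 := by rw [psi_length] at hkk; exact hkk
    rw [psi_getElem n T kk hkk] at heq
    by_cases h1 : InArm n T (kk + 3)
    · rw [if_pos h1] at heq; exact Step.noConfusion heq
    by_cases h2 : InLeg n T (kk + 3)
    · rw [if_neg h1, if_pos h2] at heq; exact Step.noConfusion heq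
    by_cases h3 : InHeart T (kk + 3) ∧ InArm n T 2
    · rw [if_neg h1, if_neg h2, if_pos h3] at heq; exact Step.noConfusion heq
    · rcases T_cover hT (m := kk + 3) (by omega) (by omega) with hA | hL | hH
      · exact absurd hA h1
      · exact absurd hL h2
      · have hnotA2 : ¬ InArm n T 2 := fun h2A => h3 ⟨hH.symm, h2A⟩
        rcases T_two_loc hT with ⟨ha, -⟩ | ⟨hl, -⟩
        · exact absurd ((inArm_two hT).2 ha) hnotA2
        · exact hl
  · intro h
    have hnotA2 : ¬ InArm n T 2 := by
      rw [inArm_two hT]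
      rcases T_two_loc hT with ⟨-, hne⟩ | ⟨-, hne⟩
      · exact absurd h hne
      · exact hne
    have hb := T_heart_bounds hT
    have hkk : T (1, 1) - 3 < (psi n T).length := by rw [psi_length]; omega
    refine List.mem_iff_getElem.2 ⟨T (1, 1) - 3, hkk, ?_⟩
    rw [psi_getElem n T _ hkk]
    have hm3 : T (1, 1) - 3 + 3 = T (1, 1) := by omega
    rw [hm3, if_neg (not_inArm_heart hT rfl), if_neg (not_inLeg_heart hT rfl),
      if_neg (fun hc => hnotA2 hc.2)]

lemma psi_getD_E (hT : IsSYT n T) {m : ℕ} (h3 : 3 ≤ m) (h4 : m ≤ 2 * n + 4) (d : Step) :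
    (psi n T).getD (m - 3) d = Step.E ↔ InArm n T m := by
  have hlt : m - 3 < (psi n T).length := by rw [psi_length]; omega
  rw [List.getD_eq_getElem _ _ hlt, psi_getElem n T _ hlt]
  have hm3 : m - 3 + 3 = m := by omega
  rw [hm3]
  constructor
  · intro h
    by_cases h1 : InArm n T m
    · exact h1
    exfalso
    rw [if_neg h1] at h
    by_cases h2 : InLeg n T m
    · rw [if_pos h2] at h; exact Step.noConfusion h
    by_cases h3 : InHeart T m ∧ InArm n T 2
    · rw [if_neg h2, if_pos h3] at h; exact Step.noConfusion h
    · rw [if_neg h2, if_neg h3] at h; exact Step.noConfusion h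
  · intro h
    rw [if_pos h]

lemma psi_getD_N (hT : IsSYT n T) {m : ℕ} (h3 : 3 ≤ m) (h4 : m ≤ 2 * n + 4) (d : Step) :
    (psi n T).getD (m - 3) d = Step.N ↔ InLeg n T m := by
  have hlt : m - 3 < (psi n T).length := by rw [psi_length]; omega
  rw [List.getD_eq_getElem _ _ hlt, psi_getElem n T _ hlt]
  have hm3 : m - 3 + 3 = m := by omega
  rw [hm3]
  constructor
  · intro h
    by_cases h1 : InArm n T m
    · rw [if_pos h1] at h; exact Step.noConfusion h
    rw [if_neg h1] at h
    by_cases h2 : InLeg n T m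
    · exact h2
    exfalso
    rw [if_neg h2] at h
    by_cases h3 : InHeart T m ∧ InArm n T 2
    · rw [if_pos h3] at h; exact Step.noConfusion h
    · rw [if_neg h3] at h; exact Step.noConfusion h
  · intro h
    rw [if_neg (fun hA => not_both hT (by omega) hA h), if_pos h]

lemma backIdx_psi (hT : IsSYT n T) : backIdx (psi n T) = T (1, 1) - 2 := by
  have hb := T_heart_bounds hT
  have hkk : T (1, 1) - 3 < (psi n T).length := by rw [psi_length]; omega
  have hfind : (psi n T).findIdx? (fun s => s == Step.S || s == Step.W)
      = some (T (1, 1) - 3) := by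
    apply findIdx?_eq_some_of _ _ _ hkk
    · rw [psi_getElem n T _ hkk]
      have hm3 : T (1, 1) - 3 + 3 = T (1, 1) := by omega
      rw [hm3, if_neg (not_inArm_heart hT rfl), if_neg (not_inLeg_heart hT rfl)]
      split_ifs <;> simp
    · intro i hi hik
      rw [psi_getElem n T i hi]
      have hi' : i < 2 * n + 2 := by rw [psi_length] at hi; exact hi
      rcases T_cover hT (m := i + 3) (by omega) (by omega) with hA | hL | hH
      · rw [if_pos hA]; simp
      · rw [if_neg (fun hA => not_both hT (by omega) hA hL), if_pos hL]; simp
      · omega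
  simp only [backIdx, hfind]
  omega

lemma sort_eq_ofFn {s : Finset ℕ} {m : ℕ} {f : Fin m → ℕ}
    (hmono : ∀ i j : Fin m, i < j → f i < f j)
    (hset : ∀ x, x ∈ s ↔ ∃ i, f i = x) :
    s.sort (· ≤ ·) = List.ofFn f := by
  have hinj : Function.Injective f := by
    intro i j hij
    rcases lt_trichotomy i j with h | h | h
    · exact absurd hij (hmono i j h).ne
    · exact h
    · exact absurd hij.symm (hmono j i h).ne
  have hnodup : (List.ofFn f).Nodup := (List.nodup_ofFn).2 hinj
  have hsorted : (List.ofFn f).Pairwise (· ≤ ·) :=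
    (List.pairwise_ofFn).2 fun i j h => (hmono i j h).le
  have h1 : (List.ofFn f).toFinset = s := by
    ext x
    rw [List.mem_toFinset, List.mem_ofFn, hset]
  have h2 : ((List.ofFn f).toFinset).val = ↑(List.ofFn f) := by
    rw [← List.toFinset_eq hnodup]
  have hperm : (s.sort (· ≤ ·)).Perm (List.ofFn f) :=
    Multiset.coe_eq_coe.1 (by rw [Finset.sort_eq, ← h1, h2])
  exact List.Perm.eq_of_pairwise' (Finset.pairwise_sort _ _) hsorted hperm

lemma armSort_psi (hT : IsSYT n T) :
    (armVals n (psi n T)).sort (· ≤ ·) = List.ofFn (fun j : Fin (n + 2) => T (0, (j : ℕ))) := by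
  have h00 := T_zero_zero hT
  apply sort_eq_ofFn
  · intro i j hij
    exact hT.2.2.1 (0, (i : ℕ)) (cell_arm _ (by have := i.isLt; omega))
      (0, (j : ℕ)) (cell_arm _ (by have := j.isLt; omega)) rfl (by exact hij)
  · intro x
    rw [mem_armVals]
    constructor
    · rintro (rfl | ⟨rfl, hS⟩ | ⟨h3, h4, hE⟩)
      · exact ⟨⟨0, by omega⟩, h00⟩
      · exact ⟨⟨1, by omega⟩, (psi_letter_S hT).1 hS⟩
      · obtain ⟨j, hj, hval⟩ := (psi_getD_E hT h3 h4 Step.N).1 hE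
        exact ⟨⟨j, by omega⟩, hval⟩
    · rintro ⟨j, hval⟩
      have hjle : (j : ℕ) ≤ n + 1 := by have := j.isLt; omega
      rcases Nat.eq_zero_or_pos (j : ℕ) with hj0 | hjpos
      · left
        rw [← hval, hj0, h00]
      · have hx2 : 2 ≤ x := by
          have := T_lt_of_ne hT (0, (j : ℕ)) (cell_arm _ hjle)
            (by simp only [ne_eq, Prod.ext_iff]; omega)
          omega
        rcases Nat.eq_or_lt_of_le hx2 with hx2' | hx3
        · right; left
          refine ⟨hx2'.symm, ?_⟩
          rw [psi_letter_S hT]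
          have hj1 := T_arm_two hT hjle (by rw [hval]; omega)
          rw [← hj1, hval]
          omega
        · right; right
          have hbd := Set.mem_Icc.1 (hT.2.1.1 (cell_arm ((j : ℕ)) hjle))
          rw [hval] at hbd
          refine ⟨by omega, by omega, ?_⟩
          rw [psi_getD_E hT (by omega) (by omega)]
          exact ⟨(j : ℕ), hjle, hval⟩

lemma legSort_psi (hT : IsSYT n T) :
    (legVals n (psi n T)).sort (· ≤ ·) = List.ofFn (fun i : Fin (n + 2) => T ((i : ℕ), 0)) := by
  have h00 := T_zero_zero hT
  apply sort_eq_ofFn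
  · intro i j hij
    exact hT.2.2.2 ((i : ℕ), 0) (cell_leg0 _ (by have := i.isLt; omega))
      ((j : ℕ), 0) (cell_leg0 _ (by have := j.isLt; omega)) rfl (by exact hij)
  · intro x
    rw [mem_legVals]
    constructor
    · rintro (rfl | ⟨rfl, hW⟩ | ⟨h3, h4, hN⟩)
      · exact ⟨⟨0, by omega⟩, h00⟩
      · exact ⟨⟨1, by omega⟩, (psi_letter_W hT).1 hW⟩
      · obtain ⟨i, hi, hval⟩ := (psi_getD_N hT h3 h4 Step.E).1 hN
        exact ⟨⟨i, by omega⟩, hval⟩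
    · rintro ⟨i, hval⟩
      have hile : (i : ℕ) ≤ n + 1 := by have := i.isLt; omega
      rcases Nat.eq_zero_or_pos (i : ℕ) with hi0 | hipos
      · left
        rw [← hval, hi0, h00]
      · have hx2 : 2 ≤ x := by
          have := T_lt_of_ne hT ((i : ℕ), 0) (cell_leg0 _ hile)
            (by simp only [ne_eq, Prod.ext_iff]; omega)
          omega
        rcases Nat.eq_or_lt_of_le hx2 with hx2' | hx3
        · right; left
          refine ⟨hx2'.symm, ?_⟩
          rw [psi_letter_W hT]
          have hi1 := T_leg_two hT hile (by rw [hval]; omega)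
          rw [← hi1, hval]
          omega
        · right; right
          have hbd := Set.mem_Icc.1 (hT.2.1.1 (cell_leg0 ((i : ℕ)) hile))
          rw [hval] at hbd
          refine ⟨by omega, by omega, ?_⟩
          rw [psi_getD_N hT (by omega) (by omega)]
          exact ⟨(i : ℕ), hile, hval⟩

lemma phi_psi (hT : IsSYT n T) : phi n (psi n T) = T := by
  have hb := T_heart_bounds hT
  funext c
  by_cases hc : c ∈ cells n
  · rcases hc with ⟨hc1, hc2⟩ | rfl | ⟨hc1, hc2, hc3⟩
    · have hcc : c = (0, c.2) := Prod.ext hc1 rfl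
      rw [hcc, phi_arm n _ hc2, armSort_psi hT,
        List.getD_eq_getElem _ _ (by rw [List.length_ofFn]; omega), List.getElem_ofFn]
    · rw [phi_heart, backIdx_psi hT]
      omega
    · have hcc : c = (c.1, 0) := Prod.ext rfl hc1
      rw [hcc, phi_leg n _ hc2 hc3, legSort_psi hT,
        List.getD_eq_getElem _ _ (by rw [List.length_ofFn]; omega), List.getElem_ofFn]
  · rw [phi_notcell n _ hc, hT.1 c hc]

end Aux8
/-- For every lattice path `w ∈ 𝒫ₙ`, the filling `φ(w)` is a standard
Young tableau of shape `θ⁽ⁿ⁾`; moreover `φ` is a two-sided inverse of `ψ`. -/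
theorem phi_wellDefined_and_inverse (n : ℕ) :
    (∀ w : List Step, IsPath n w → IsSYT n (phi n w)) ∧
    (∀ w : List Step, IsPath n w → psi n (phi n w) = w) ∧
    (∀ T : ℕ × ℕ → ℕ, IsSYT n T → phi n (psi n T) = T) := by
  exact ⟨fun w hw => isSYT_phi hw, fun w hw => psi_phi hw, fun T hT => phi_psi hT⟩
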